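/- Let R be a 2n×2n real upper triangular matrix with strictly positive diagonal entries. If the symmetric matrix Rᵀ R satisfies (Rᵀ R) J̃_{2n} (Rᵀ R) = J̃_{2n}, then R itself satisfies Rᵀ J̃_{2n} R = J̃_{2n}. -/

import Mathlib

open Matrix

/-- The antidiagonal matrix `Ĩ_n` with ones on the antidiagonal. -/
noncomputable def Itilde (n : ℕ) : Matrix (Fin n) (Fin n) ℝ :=
  fun i j => if (i : ℕ) + (j : ℕ) + 1 = n then 1 else 0

/-- The matrix `J̃_{2n} = [[0, -Ĩ_n],[Ĩ_n, 0]]`. -/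
noncomputable def Jtilde (n : ℕ) : Matrix (Fin (2*n)) (Fin (2*n)) ℝ :=
  fun i j => if (i : ℕ) + (j : ℕ) + 1 = 2*n then (if (i : ℕ) < n then -1 else 1) else 0



def revF {m : ℕ} (i : Fin m) : Fin m := ⟨m - 1 - (i : ℕ), by have := i.isLt; omega⟩

lemma revF_val {m : ℕ} (i : Fin m) : ((revF i : Fin m) : ℕ) = m - 1 - (i : ℕ) := rfl

lemma sum_ite_rev_left {m : ℕ} (i : Fin m) (f : Fin m → ℝ) :
    (∑ k : Fin m, if (i : ℕ) + (k : ℕ) + 1 = m then f k else 0) = f (revF i) := by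
  have hi := i.isLt
  rw [Finset.sum_eq_single (revF i)]
  · rw [if_pos (by simp [revF_val]; omega)]
  · intro k _ hk
    rw [if_neg]
    intro h
    exact hk (Fin.ext (by have := k.isLt; simp [revF_val]; omega))
  · simp

lemma sum_ite_rev_right {m : ℕ} (j : Fin m) (f : Fin m → ℝ) :
    (∑ k : Fin m, if (k : ℕ) + (j : ℕ) + 1 = m then f k else 0) = f (revF j) := by
  have hj := j.isLt
  rw [Finset.sum_eq_single (revF j)]
  · rw [if_pos (by simp [revF_val]; omega)]
  · intro k _ hk
    rw [if_neg]
    intro h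
    exact hk (Fin.ext (by have := k.isLt; simp [revF_val]; omega))
  · simp

lemma Jmul_apply (n : ℕ) (M : Matrix (Fin (2*n)) (Fin (2*n)) ℝ) (i j : Fin (2*n)) :
    (Jtilde n * M) i j = (if (i : ℕ) < n then (-1:ℝ) else 1) * M (revF i) j := by
  rw [Matrix.mul_apply]
  rw [show (∑ k, Jtilde n i k * M k j)
      = ∑ k : Fin (2*n), if (i : ℕ) + (k : ℕ) + 1 = 2*n then
          (if (i : ℕ) < n then (-1:ℝ) else 1) * M k j else 0 by
    apply Finset.sum_congr rfl
    intro k _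
    simp only [Jtilde]
    split_ifs <;> simp]
  exact sum_ite_rev_left i _

lemma mulJ_apply (n : ℕ) (M : Matrix (Fin (2*n)) (Fin (2*n)) ℝ) (i j : Fin (2*n)) :
    (M * Jtilde n) i j = M i (revF j) * (if ((revF j : Fin (2*n)) : ℕ) < n then (-1:ℝ) else 1) := by
  rw [Matrix.mul_apply]
  rw [show (∑ k, M i k * Jtilde n k j)
      = ∑ k : Fin (2*n), if (k : ℕ) + (j : ℕ) + 1 = 2*n then
          M i k * (if (k : ℕ) < n then (-1:ℝ) else 1) else 0 by
    apply Finset.sum_congr rfl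
    intro k _
    simp only [Jtilde]
    split_ifs <;> simp]
  exact sum_ite_rev_right j _

lemma JT (n : ℕ) : (Jtilde n)ᵀ = -(Jtilde n) := by
  ext i j
  have hi := i.isLt; have hj := j.isLt
  simp only [Jtilde, Matrix.transpose_apply, Matrix.neg_apply]
  split_ifs <;> first | rfl | omega | norm_num | (exfalso; omega)

lemma JJ (n : ℕ) : Jtilde n * Jtilde n = -1 := by
  ext i j
  rw [Jmul_apply]
  have hi := i.isLt; have hj := j.isLt
  simp only [Jtilde, Matrix.neg_apply, Matrix.one_apply]
  have hr := revF_val i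
  by_cases hij : i = j
  · subst hij
    rw [if_pos rfl]
    split_ifs <;> first | (exfalso; omega) | norm_num
  · rw [if_neg hij]
    have hc : ¬(((revF i : Fin (2*n)) : ℕ) + (j:ℕ) + 1 = 2*n) := fun h => hij (Fin.ext (by omega))
    rw [if_neg hc]
    simp

lemma tri_mul_diag {m : ℕ} {A B : Matrix (Fin m) (Fin m) ℝ}
    (hA : A.BlockTriangular id) (hB : B.BlockTriangular id) (i : Fin m) :
    (A * B) i i = A i i * B i i := by
  rw [Matrix.mul_apply, Finset.sum_eq_single i]
  · intro k _ hk
    rcases lt_or_gt_of_ne hk with h | h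
    · rw [hA (show (id k : Fin m) < id i from h), zero_mul]
    · rw [hB (show (id i : Fin m) < id k from h), mul_zero]
  · simp

lemma tri_inv_diag {m : ℕ} {A : Matrix (Fin m) (Fin m) ℝ}
    (hA : A.BlockTriangular id) (hdet : IsUnit A.det) (i : Fin m) :
    A⁻¹ i i = (A i i)⁻¹ := by
  haveI : Invertible A := A.invertibleOfIsUnitDet hdet
  have hAi : A⁻¹.BlockTriangular id := blockTriangular_inv_of_blockTriangular hA
  have h1 : (A * A⁻¹) i i = 1 := by rw [Matrix.mul_nonsing_inv A hdet]; simp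
  rw [tri_mul_diag hA hAi] at h1
  have hAii : A i i ≠ 0 := by
    intro h; rw [h, zero_mul] at h1; exact one_ne_zero h1.symm
  field_simp at h1 ⊢
  linarith [h1]

lemma tri_det_pos {m : ℕ} {A : Matrix (Fin m) (Fin m) ℝ}
    (hA : A.BlockTriangular id) (hd : ∀ i, 0 < A i i) : IsUnit A.det := by
  rw [Matrix.det_of_upperTriangular hA]
  exact (Finset.prod_pos (fun i _ => hd i)).ne'.isUnit

/-- Uniqueness of the Cholesky factorization. -/
lemma chol_unique {m : ℕ} {U V : Matrix (Fin m) (Fin m) ℝ}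
    (hU : U.BlockTriangular id) (hV : V.BlockTriangular id)
    (hUd : ∀ i, 0 < U i i) (hVd : ∀ i, 0 < V i i)
    (h : Uᵀ * U = Vᵀ * V) : U = V := by
  have hVdet : IsUnit V.det := tri_det_pos hV hVd
  haveI : Invertible V := V.invertibleOfIsUnitDet hVdet
  set W := U * V⁻¹ with hWdef
  have hVi : V⁻¹.BlockTriangular id := blockTriangular_inv_of_blockTriangular hV
  have hW : W.BlockTriangular id := hU.mul hVi
  have hWo : Wᵀ * W = 1 := by
    have : Wᵀ * W = V⁻¹ᵀ * (Uᵀ * U) * V⁻¹ := by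
      simp [hWdef, Matrix.transpose_mul, Matrix.mul_assoc]
    rw [this, h]
    calc V⁻¹ᵀ * (Vᵀ * V) * V⁻¹ = V⁻¹ᵀ * Vᵀ * (V * V⁻¹) := by
          simp [Matrix.mul_assoc]
      _ = (V * V⁻¹)ᵀ * (V * V⁻¹) := by rw [Matrix.transpose_mul]
      _ = 1 := by rw [Matrix.mul_nonsing_inv V hVdet]; simp
  haveI : Invertible W := invertibleOfLeftInverse W _ hWo
  have hWinv : W⁻¹ = Wᵀ := Matrix.inv_eq_left_inv hWo
  have hWd : ∀ i, 0 < W i i := by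
    intro i
    rw [hWdef, tri_mul_diag hU hVi, tri_inv_diag hV hVdet]
    exact mul_pos (hUd i) (inv_pos.mpr (hVd i))
  have hWut : Wᵀ.BlockTriangular id := by
    rw [← hWinv]; exact blockTriangular_inv_of_blockTriangular hW
  have hWdiagonal : ∀ i j : Fin m, i ≠ j → W i j = 0 := by
    intro i j hij
    rcases lt_or_gt_of_ne hij with h' | h'
    · exact hWut (show (id i : Fin m) < id j from h')
    · exact hW (show (id j : Fin m) < id i from h')
  have hWone : W = 1 := by
    ext i j
    by_cases hij : i = j
    · subst hij
      have h1 : (Wᵀ * W) i i = 1 := by rw [hWo]; simp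
      rw [Matrix.mul_apply, Finset.sum_eq_single i] at h1
      · have : W i i * W i i = 1 := by simpa using h1
        have := hWd i
        have hsq : (W i i - 1) * (W i i + 1) = 0 := by ring_nf; nlinarith
        rcases mul_eq_zero.mp hsq with h2 | h2
        · simp [show W i i = 1 by linarith]
        · nlinarith
      · intro k _ hk
        rw [Matrix.transpose_apply, hWdiagonal k i hk, zero_mul]
      · simp
    · rw [hWdiagonal i j hij]
      simp [Matrix.one_apply, hij]
  have : U = W * V := by
    rw [hWdef, Matrix.mul_assoc, Matrix.nonsing_inv_mul V hVdet, Matrix.mul_one]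
  rw [this, hWone, Matrix.one_mul]


/-- if `R` is upper triangular with strictly positive diagonal and
`(RᵀR) J̃ (RᵀR) = J̃`, then `Rᵀ J̃ R = J̃`. -/
theorem upper_triangular_almost_symplectic (n : ℕ)
    (R : Matrix (Fin (2*n)) (Fin (2*n)) ℝ)
    (hRtri : ∀ i j : Fin (2*n), (j : ℕ) < (i : ℕ) → R i j = 0)
    (hRdiag : ∀ i : Fin (2*n), 0 < R i i)
    (hRTR : (Rᵀ * R) * Jtilde n * (Rᵀ * R) = Jtilde n) :
    Rᵀ * Jtilde n * R = Jtilde n := by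
  have hJT := JT n
  have hJJ := JJ n
  have hJnegJ : Jtilde n * (-(Jtilde n)) = 1 := by rw [Matrix.mul_neg, hJJ]; simp
  have hnegJJ : (-(Jtilde n)) * Jtilde n = 1 := by rw [Matrix.neg_mul, hJJ]; simp
  have hRbt : R.BlockTriangular id := fun i j h => hRtri i j h
  have hRdet : IsUnit R.det := tri_det_pos hRbt hRdiag
  haveI : Invertible R := R.invertibleOfIsUnitDet hRdet
  have hRibt : R⁻¹.BlockTriangular id := blockTriangular_inv_of_blockTriangular hRbt
  set U : Matrix (Fin (2*n)) (Fin (2*n)) ℝ := Jtilde n * R⁻¹ᵀ * (-(Jtilde n)) with hU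
  have hUentry : ∀ i j : Fin (2*n), U i j =
      -((if (i : ℕ) < n then (-1:ℝ) else 1) * R⁻¹ (revF j) (revF i)
        * (if ((revF j : Fin (2*n)) : ℕ) < n then (-1:ℝ) else 1)) := by
    intro i j
    have h1 : U i j = -((Jtilde n * R⁻¹ᵀ * Jtilde n) i j) := by
      rw [hU, Matrix.mul_neg]; simp
    rw [h1, mulJ_apply, Jmul_apply]
    simp only [Matrix.transpose_apply]
  have hUtri : U.BlockTriangular id := by
    intro i j hij
    have hij' : (j : ℕ) < (i : ℕ) := hij
    have hi := i.isLt; have hj := j.isLt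
    rw [hUentry]
    have hz : R⁻¹ (revF j) (revF i) = 0 := by
      apply hRibt
      show (revF i : Fin (2*n)) < revF j
      rw [Fin.lt_def]
      simp only [revF_val]
      omega
    rw [hz]; ring
  have hUdiag : ∀ i, 0 < U i i := by
    intro i
    have hi := i.isLt
    rw [hUentry, tri_inv_diag hRbt hRdet]
    have hp : 0 < (R (revF i) (revF i))⁻¹ := inv_pos.mpr (hRdiag _)
    have hr := revF_val i
    split_ifs <;> first | (exfalso; omega) | nlinarith
  have hS : (Rᵀ * R) * (Jtilde n * (Rᵀ * R) * (-(Jtilde n))) = 1 := by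
    calc (Rᵀ * R) * (Jtilde n * (Rᵀ * R) * (-(Jtilde n)))
        = ((Rᵀ * R) * Jtilde n * (Rᵀ * R)) * (-(Jtilde n)) := by
          simp only [Matrix.mul_assoc]
      _ = Jtilde n * (-(Jtilde n)) := by rw [hRTR]
      _ = 1 := hJnegJ
  have hSinv : (Rᵀ * R)⁻¹ = Jtilde n * (Rᵀ * R) * (-(Jtilde n)) :=
    Matrix.inv_eq_right_inv hS
  have hUT : Uᵀ = Jtilde n * R⁻¹ * (-(Jtilde n)) := by
    rw [hU]
    simp [Matrix.transpose_mul, Matrix.transpose_neg, hJT, Matrix.mul_assoc,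
      Matrix.mul_neg, Matrix.neg_mul]
  have hChol : Uᵀ * U = Rᵀ * R := by
    rw [hUT, hU]
    have e1 : (Jtilde n * R⁻¹ * (-(Jtilde n))) * (Jtilde n * R⁻¹ᵀ * (-(Jtilde n)))
        = Jtilde n * (R⁻¹ * R⁻¹ᵀ) * (-(Jtilde n)) := by
      calc (Jtilde n * R⁻¹ * (-(Jtilde n))) * (Jtilde n * R⁻¹ᵀ * (-(Jtilde n)))
          = Jtilde n * (R⁻¹ * (((-(Jtilde n)) * Jtilde n) * (R⁻¹ᵀ * (-(Jtilde n))))) := by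
            simp only [Matrix.mul_assoc]
        _ = Jtilde n * (R⁻¹ * R⁻¹ᵀ) * (-(Jtilde n)) := by
            rw [hnegJJ, Matrix.one_mul]; simp only [Matrix.mul_assoc]
    rw [e1]
    have e2 : R⁻¹ * R⁻¹ᵀ = (Rᵀ * R)⁻¹ := by
      rw [Matrix.mul_inv_rev, R.transpose_nonsing_inv]
    rw [e2, hSinv]
    calc Jtilde n * (Jtilde n * (Rᵀ * R) * (-(Jtilde n))) * (-(Jtilde n))
        = (Jtilde n * Jtilde n) * (Rᵀ * R) * ((-(Jtilde n)) * (-(Jtilde n))) := by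
          simp only [Matrix.mul_assoc]
      _ = (-1) * (Rᵀ * R) * (-1) := by
          rw [neg_mul_neg, hJJ]
      _ = Rᵀ * R := by simp
  have hUR : U = R := chol_unique hUtri hRbt hUdiag hRdiag hChol
  have hRTdet : IsUnit Rᵀ.det := by rwa [Matrix.det_transpose]
  have h1 : Jtilde n * Rᵀ⁻¹ * (-(Jtilde n)) = R := by
    rw [← R.transpose_nonsing_inv]; exact hUR
  have h2 : Rᵀ⁻¹ * (-(Jtilde n)) = (-(Jtilde n)) * R := by
    have h := congrArg (fun X => (-(Jtilde n)) * X) h1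
    simp only [← Matrix.mul_assoc] at h
    rw [hnegJJ, Matrix.one_mul] at h
    exact h
  have h3 : Rᵀ * (Rᵀ⁻¹ * (-(Jtilde n))) = Rᵀ * ((-(Jtilde n)) * R) := by rw [h2]
  rw [← Matrix.mul_assoc, Matrix.mul_nonsing_inv Rᵀ hRTdet, Matrix.one_mul] at h3
  have h4 : Rᵀ * ((-(Jtilde n)) * R) = -(Rᵀ * Jtilde n * R) := by
    simp [Matrix.mul_neg, Matrix.neg_mul, Matrix.mul_assoc]
  rw [h4] at h3
  exact neg_inj.mp h3.symm
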